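/- Let α, β, λ ∈ ℂ with α² = -a, β² = -b, κ² = -λ. Define w(n,m) = -(α·n + β·m + ξ) and ψ(n,m) = ρ⁺·(α+κ)ⁿ·(β+κ)ᵐ + ρ⁻·(α-κ)ⁿ·(β-κ)ᵐ for constants ξ, ρ⁺, ρ⁻ ∈ ℂ. Then: (i) w satisfies the lpKdV equation (w(n,m) - w(n+1,m+1))·(w(n+1,m) - w(n,m+1)) = a - b; (ii) ψ satisfies -ψ(n+2,m) - (w(n+2,m) - w(n,m))·ψ(n+1,m) + a·ψ(n,m) = λ·ψ(n,m); and (iii) ψ satisfies ψ(n,m+1) = ψ(n+1,m) - (w(n,m+1) - w(n+1,m))·ψ(n,m). -/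
import Mathlib


/-- seed solution `w(n,m) = -(αn + βm + ξ)` of the autonomous lpKdV
equation together with its fixed eigenfunctions
`ψ(n,m) = ρ⁺(α+κ)ⁿ(β+κ)ᵐ + ρ⁻(α-κ)ⁿ(β-κ)ᵐ` solving the Lax pair. -/
theorem lpKdV_seed_and_eigenfunctions
    (a b lam α β κ ξ ρp ρm : ℂ)
    (hα : α ^ 2 = -a) (hβ : β ^ 2 = -b) (hκ : κ ^ 2 = -lam)
    (hακ : α + κ ≠ 0) (hακ' : α - κ ≠ 0) (hβκ : β + κ ≠ 0) (hβκ' : β - κ ≠ 0)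
    (w ψ : ℤ → ℤ → ℂ)
    (hw : ∀ n m : ℤ, w n m = -(α * n + β * m + ξ))
    (hψ : ∀ n m : ℤ, ψ n m = ρp * (α + κ) ^ n * (β + κ) ^ m
                            + ρm * (α - κ) ^ n * (β - κ) ^ m) :
    (∀ n m : ℤ, (w n m - w (n + 1) (m + 1)) * (w (n + 1) m - w n (m + 1)) = a - b) ∧
    (∀ n m : ℤ, -ψ (n + 2) m - (w (n + 2) m - w n m) * ψ (n + 1) m + a * ψ n m
        = lam * ψ n m) ∧
    (∀ n m : ℤ, ψ n (m + 1) = ψ (n + 1) m - (w n (m + 1) - w (n + 1) m) * ψ n m) := by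
  refine ⟨fun n m => ?_, fun n m => ?_, fun n m => ?_⟩
  · simp only [hw]
    push_cast
    linear_combination -hα + hβ
  · simp only [hw, hψ]
    rw [show n + 2 = n + 1 + 1 by ring]
    rw [zpow_add_one₀ hακ, zpow_add_one₀ hακ, zpow_add_one₀ hακ',
      zpow_add_one₀ hακ']
    push_cast
    generalize (α + κ) ^ n = A
    generalize (β + κ) ^ m = B
    generalize (α - κ) ^ n = C
    generalize (β - κ) ^ m = D
    linear_combination (ρp*A*B + ρm*C*D) * hα - (ρp*A*B + ρm*C*D) * hκ
  · simp only [hw, hψ]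
    rw [zpow_add_one₀ hβκ, zpow_add_one₀ hβκ', zpow_add_one₀ hακ, zpow_add_one₀ hακ']
    push_cast
    generalize (α + κ) ^ n = A
    generalize (β + κ) ^ m = B
    generalize (α - κ) ^ n = C
    generalize (β - κ) ^ m = D
    ring
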